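/- Let N ≥ 4. If v ∈ C¹((0,1)) satisfies ∫₀¹ v(x)² x^{3/2}(1-x)^{N/2-1} dx < ∞ and ∫₀¹ (x(1-x)) v'(x)² x^{3/2}(1-x)^{N/2-1} dx < ∞, then there exists a constant C > 0 such that |v(x)| ≤ C x^{-3/4} (1-x)^{-N/4+1/2} for all x ∈ (0,1). -/

import Mathlib

open Real MeasureTheory Set Filter Topology


lemma memLp_two_of_contOn {a b : ℝ} {f : ℝ → ℝ} (hf : ContinuousOn f (Icc a b)) :
    MemLp f (ENNReal.ofReal 2) (volume.restrict (Ioc a b)) := by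
  haveI : IsFiniteMeasure (volume.restrict (Ioc a b)) :=
    ⟨by rw [Measure.restrict_apply_univ]; exact measure_Ioc_lt_top⟩
  obtain ⟨C, hC⟩ := isCompact_Icc.exists_bound_of_continuousOn hf
  refine MemLp.of_bound
    ((hf.mono Ioc_subset_Icc_self).aestronglyMeasurable measurableSet_Ioc) C ?_
  filter_upwards [ae_restrict_mem measurableSet_Ioc] with x hx
  exact hC x (Ioc_subset_Icc_self hx)

lemma cs_Ioc {a b : ℝ} {f g : ℝ → ℝ} (hf : ContinuousOn f (Icc a b))
    (hg : ContinuousOn g (Icc a b)) :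
    ∫ x in Ioc a b, |f x| * |g x| ≤
      (∫ x in Ioc a b, f x ^ 2) ^ ((1:ℝ)/2) * (∫ x in Ioc a b, g x ^ 2) ^ ((1:ℝ)/2) := by
  have hpq : Real.HolderConjugate 2 2 := ⟨by norm_num, by norm_num, by norm_num⟩
  have h := integral_mul_le_Lp_mul_Lq_of_nonneg (μ := volume.restrict (Ioc a b)) hpq
    (f := fun x => |f x|) (g := fun x => |g x|)
    (Eventually.of_forall fun x => abs_nonneg _)
    (Eventually.of_forall fun x => abs_nonneg _)
    (memLp_two_of_contOn hf.abs) (memLp_two_of_contOn hg.abs)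
  simpa [Real.rpow_two, sq_abs] using h

lemma key_bound (N : ℝ) (v : ℝ → ℝ) (hv : ContDiffOn ℝ 1 v (Ioo 0 1))
    (hvX1 : IntegrableOn
      (fun x => (x*(1-x)) * (deriv v x)^2 * (x ^ ((3:ℝ)/2) * (1-x) ^ (N/2 - 1)))
      (Ioo 0 1))
    {a b : ℝ} (ha : 0 < a) (hab : a ≤ b) (hb : b < 1) :
    |v b - v a| ≤
      (∫ t in Ioo (0:ℝ) 1, (t*(1-t)) * (deriv v t)^2 * (t ^ ((3:ℝ)/2) * (1-t) ^ (N/2 - 1))) ^ ((1:ℝ)/2)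
        * (∫ t in Ioc a b, t ^ (-(5:ℝ)/2) * (1-t) ^ (-N/2)) ^ ((1:ℝ)/2) := by
  have hsub : Icc a b ⊆ Ioo 0 1 :=
    fun t ht => ⟨lt_of_lt_of_le ha ht.1, lt_of_le_of_lt ht.2 hb⟩
  have hdc : ContinuousOn (deriv v) (Icc a b) :=
    (hv.continuousOn_deriv_of_isOpen isOpen_Ioo le_rfl).mono hsub
  have huIcc : uIcc a b = Icc a b := uIcc_of_le hab
  -- FTC
  have hftc : ∫ t in a..b, deriv v t = v b - v a := by
    refine intervalIntegral.integral_deriv_eq_sub (fun t ht => ?_) ?_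
    · rw [huIcc] at ht
      exact (hv.differentiableOn one_ne_zero).differentiableAt
        (isOpen_Ioo.mem_nhds (hsub ht))
    · exact (hdc.mono (by rw [huIcc])).intervalIntegrable
  have habs : |v b - v a| ≤ ∫ t in Ioc a b, |deriv v t| := by
    rw [← hftc, ← intervalIntegral.integral_of_le hab]
    exact intervalIntegral.abs_integral_le_integral_abs hab
  set f : ℝ → ℝ := fun t => t ^ ((5:ℝ)/4) * (1-t) ^ (N/4) * deriv v t with hf_def
  set g : ℝ → ℝ := fun t => t ^ (-(5:ℝ)/4) * (1-t) ^ (-N/4) with hg_def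
  have hfg : ∀ t ∈ Ioc a b, |deriv v t| = |f t| * |g t| := by
    intro t ht
    have ht' := hsub (Ioc_subset_Icc_self ht)
    have h1t : (0:ℝ) < 1 - t := by linarith [ht'.2]
    have hgpos : (0:ℝ) < t ^ (-(5:ℝ)/4) * (1-t) ^ (-N/4) :=
      mul_pos (rpow_pos_of_pos ht'.1 _) (rpow_pos_of_pos h1t _)
    rw [hf_def, hg_def]
    simp only [abs_mul, abs_of_pos (rpow_pos_of_pos ht'.1 ((5:ℝ)/4)),
      abs_of_pos (rpow_pos_of_pos h1t (N/4)), abs_of_pos (rpow_pos_of_pos ht'.1 (-(5:ℝ)/4)),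
      abs_of_pos (rpow_pos_of_pos h1t (-N/4))]
    rw [show t ^ ((5:ℝ)/4) * (1-t) ^ (N/4) * |deriv v t| * (t ^ (-(5:ℝ)/4) * (1-t) ^ (-N/4))
        = (t ^ ((5:ℝ)/4) * t ^ (-(5:ℝ)/4)) * ((1-t) ^ (N/4) * (1-t) ^ (-N/4)) * |deriv v t|
        by ring,
      ← Real.rpow_add ht'.1, ← Real.rpow_add h1t,
      show N/4 + -N/4 = (0:ℝ) by ring]
    norm_num
  have hfc : ContinuousOn f (Icc a b) := by
    refine ContinuousOn.mul (ContinuousOn.mul ?_ ?_) hdc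
    · exact continuousOn_id.rpow_const fun t ht => Or.inl (ne_of_gt (hsub ht).1)
    · exact (continuousOn_const.sub continuousOn_id).rpow_const
        fun t ht => Or.inl (by have := (hsub ht).2; intro h; simp at h; linarith)
  have hgc : ContinuousOn g (Icc a b) := by
    refine ContinuousOn.mul ?_ ?_
    · exact continuousOn_id.rpow_const fun t ht => Or.inl (ne_of_gt (hsub ht).1)
    · exact (continuousOn_const.sub continuousOn_id).rpow_const
        fun t ht => Or.inl (by have := (hsub ht).2; intro h; simp at h; linarith)
  have hcs : ∫ t in Ioc a b, |f t| * |g t| ≤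
      (∫ t in Ioc a b, f t ^ 2) ^ ((1:ℝ)/2) * (∫ t in Ioc a b, g t ^ 2) ^ ((1:ℝ)/2) :=
    cs_Ioc hfc hgc
  -- identify f² and g²
  have hsq : ∀ t ∈ Ioc a b, f t ^ 2 =
      (t*(1-t)) * (deriv v t)^2 * (t ^ ((3:ℝ)/2) * (1-t) ^ (N/2 - 1)) := by
    intro t ht
    have ht' := hsub (Ioc_subset_Icc_self ht)
    have h1t : (0:ℝ) < 1 - t := by linarith [ht'.2]
    have e1 : (t ^ ((5:ℝ)/4))^2 = t * t ^ ((3:ℝ)/2) := by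
      rw [← Real.rpow_two, ← Real.rpow_mul ht'.1.le,
        show (5:ℝ)/4 * 2 = 1 + 3/2 by norm_num, Real.rpow_add ht'.1, Real.rpow_one]
    have e2 : ((1-t) ^ (N/4))^2 = (1-t) * (1-t) ^ (N/2 - 1) := by
      rw [← Real.rpow_two, ← Real.rpow_mul h1t.le,
        show N/4 * 2 = 1 + (N/2 - 1) by ring, Real.rpow_add h1t, Real.rpow_one]
    rw [hf_def]
    simp only
    rw [mul_pow, mul_pow, e1, e2]; ring
  have hgsq : ∀ t ∈ Ioc a b, g t ^ 2 = t ^ (-(5:ℝ)/2) * (1-t) ^ (-N/2) := by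
    intro t ht
    have ht' := hsub (Ioc_subset_Icc_self ht)
    have h1t : (0:ℝ) < 1 - t := by linarith [ht'.2]
    rw [hg_def]
    simp only
    rw [mul_pow, ← Real.rpow_two, ← Real.rpow_two, ← Real.rpow_mul ht'.1.le,
      ← Real.rpow_mul h1t.le, show -(5:ℝ)/4 * 2 = -5/2 by norm_num,
      show -N/4 * 2 = -N/2 by ring]
  have h1 : ∫ t in Ioc a b, |deriv v t| = ∫ t in Ioc a b, |f t| * |g t| :=
    setIntegral_congr_fun measurableSet_Ioc hfg
  have h2 : ∫ t in Ioc a b, f t ^ 2 =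
      ∫ t in Ioc a b, (t*(1-t)) * (deriv v t)^2 * (t ^ ((3:ℝ)/2) * (1-t) ^ (N/2 - 1)) :=
    setIntegral_congr_fun measurableSet_Ioc hsq
  have h3 : ∫ t in Ioc a b, g t ^ 2 = ∫ t in Ioc a b, t ^ (-(5:ℝ)/2) * (1-t) ^ (-N/2) :=
    setIntegral_congr_fun measurableSet_Ioc hgsq
  have h4 : ∫ t in Ioc a b, (t*(1-t)) * (deriv v t)^2 * (t ^ ((3:ℝ)/2) * (1-t) ^ (N/2 - 1)) ≤
      ∫ t in Ioo (0:ℝ) 1, (t*(1-t)) * (deriv v t)^2 * (t ^ ((3:ℝ)/2) * (1-t) ^ (N/2 - 1)) := by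
    refine setIntegral_mono_set hvX1 ?_ ((Ioc_subset_Icc_self.trans hsub).eventuallyLE)
    filter_upwards [ae_restrict_mem measurableSet_Ioo] with t ht
    have h1t : (0:ℝ) ≤ 1 - t := by linarith [ht.2]
    exact mul_nonneg (mul_nonneg (mul_nonneg ht.1.le h1t) (sq_nonneg _))
      (mul_nonneg (rpow_nonneg ht.1.le _) (rpow_nonneg h1t _))
  have hf2nonneg : (0:ℝ) ≤ ∫ t in Ioc a b, f t ^ 2 :=
    setIntegral_nonneg measurableSet_Ioc fun t _ => sq_nonneg _
  have hg2nonneg : (0:ℝ) ≤ ∫ t in Ioc a b, t ^ (-(5:ℝ)/2) * (1-t) ^ (-N/2) := by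
    refine setIntegral_nonneg measurableSet_Ioc fun t ht => ?_
    have ht' := hsub (Ioc_subset_Icc_self ht)
    exact mul_nonneg (rpow_nonneg ht'.1.le _) (rpow_nonneg (by linarith [ht'.2]) _)
  calc |v b - v a| ≤ ∫ t in Ioc a b, |deriv v t| := habs
    _ = ∫ t in Ioc a b, |f t| * |g t| := h1
    _ ≤ (∫ t in Ioc a b, f t ^ 2) ^ ((1:ℝ)/2) * (∫ t in Ioc a b, g t ^ 2) ^ ((1:ℝ)/2) := hcs
    _ ≤ _ := by
        rw [h3]
        refine mul_le_mul_of_nonneg_right ?_ (rpow_nonneg hg2nonneg _)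
        refine Real.rpow_le_rpow hf2nonneg ?_ (by norm_num)
        rw [h2]; exact h4

lemma half_rpow (y : ℝ) : ((1:ℝ)/2) ^ y = (2:ℝ) ^ (-y) := by
  rw [one_div, ← Real.rpow_neg_one (2:ℝ), ← Real.rpow_mul (by norm_num)]
  norm_num

lemma est_left {N x : ℝ} (hN : 0 ≤ N) (hx : 0 < x) (hx2 : x ≤ 1/2) :
    ∫ t in Ioc x (1/2), t ^ (-(5:ℝ)/2) * (1-t) ^ (-N/2) ≤
      (2:ℝ) ^ (N/2) * x ^ (-(3:ℝ)/2) := by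
  have hsub : Icc x (1/2) ⊆ Ioo 0 1 := fun t ht =>
    ⟨lt_of_lt_of_le hx ht.1, lt_of_le_of_lt ht.2 (by norm_num)⟩
  have hint1 : IntegrableOn (fun t => t ^ (-(5:ℝ)/2) * (1-t) ^ (-N/2)) (Ioc x (1/2)) := by
    refine (ContinuousOn.integrableOn_Icc ?_).mono_set Ioc_subset_Icc_self
    refine ContinuousOn.mul
      (continuousOn_id.rpow_const fun t ht => Or.inl (ne_of_gt (hsub ht).1))
      ((continuousOn_const.sub continuousOn_id).rpow_const fun t ht => Or.inl ?_)
    have := (hsub ht).2; intro h; simp at h; linarith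
  have hint2 : IntegrableOn (fun t => (2:ℝ) ^ (N/2) * t ^ (-(5:ℝ)/2)) (Ioc x (1/2)) := by
    refine (ContinuousOn.integrableOn_Icc ?_).mono_set Ioc_subset_Icc_self
    exact continuousOn_const.mul
      (continuousOn_id.rpow_const fun t ht => Or.inl (ne_of_gt (hsub ht).1))
  have hmono : ∫ t in Ioc x (1/2), t ^ (-(5:ℝ)/2) * (1-t) ^ (-N/2) ≤
      ∫ t in Ioc x (1/2), (2:ℝ) ^ (N/2) * t ^ (-(5:ℝ)/2) := by
    refine setIntegral_mono_on hint1 hint2 measurableSet_Ioc fun t ht => ?_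
    have ht' := hsub (Ioc_subset_Icc_self ht)
    have hb : (1:ℝ)/2 ≤ 1 - t := by linarith [ht.2]
    have : (1-t) ^ (-N/2) ≤ ((1:ℝ)/2) ^ (-N/2) :=
      Real.rpow_le_rpow_of_nonpos (by norm_num) hb (by linarith)
    rw [half_rpow, show -(-N/2) = N/2 by ring] at this
    have hpos : (0:ℝ) ≤ t ^ (-(5:ℝ)/2) := rpow_nonneg ht'.1.le _
    calc t ^ (-(5:ℝ)/2) * (1-t) ^ (-N/2) ≤ t ^ (-(5:ℝ)/2) * (2:ℝ) ^ (N/2) :=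
          mul_le_mul_of_nonneg_left this hpos
      _ = (2:ℝ) ^ (N/2) * t ^ (-(5:ℝ)/2) := mul_comm _ _
  have hcalc : ∫ t in Ioc x (1/2), t ^ (-(5:ℝ)/2)
      = ((1/2:ℝ) ^ (-(3:ℝ)/2) - x ^ (-(3:ℝ)/2)) / (-(3:ℝ)/2) := by
    rw [← intervalIntegral.integral_of_le hx2]
    rw [integral_rpow (Or.inr ⟨by norm_num, ?_⟩)]
    · norm_num
    · rw [uIcc_of_le hx2]
      intro h; exact absurd h.1 (not_le.mpr hx)
  calc ∫ t in Ioc x (1/2), t ^ (-(5:ℝ)/2) * (1-t) ^ (-N/2)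
      ≤ ∫ t in Ioc x (1/2), (2:ℝ) ^ (N/2) * t ^ (-(5:ℝ)/2) := hmono
    _ = (2:ℝ) ^ (N/2) * ∫ t in Ioc x (1/2), t ^ (-(5:ℝ)/2) := by
        rw [integral_const_mul]
    _ ≤ (2:ℝ) ^ (N/2) * x ^ (-(3:ℝ)/2) := by
        refine mul_le_mul_of_nonneg_left ?_ (rpow_nonneg (by norm_num) _)
        rw [hcalc]
        have h1 : (0:ℝ) ≤ (1/2:ℝ) ^ (-(3:ℝ)/2) := rpow_nonneg (by norm_num) _
        have h2 : (0:ℝ) < x ^ (-(3:ℝ)/2) := rpow_pos_of_pos hx _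
        nlinarith

lemma est_right {N x : ℝ} (hN : 4 ≤ N) (hx : 1/2 ≤ x) (hx2 : x < 1) :
    ∫ t in Ioc (1/2) x, t ^ (-(5:ℝ)/2) * (1-t) ^ (-N/2) ≤
      (2:ℝ) ^ ((5:ℝ)/2) * (1-x) ^ ((1:ℝ) - N/2) := by
  have hsub : Icc (1/2) x ⊆ Ioo 0 1 := fun t ht =>
    ⟨lt_of_lt_of_le (by norm_num) ht.1, lt_of_le_of_lt ht.2 hx2⟩
  have h1x : (0:ℝ) < 1 - x := by linarith
  have hint1 : IntegrableOn (fun t => t ^ (-(5:ℝ)/2) * (1-t) ^ (-N/2)) (Ioc (1/2) x) := by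
    refine (ContinuousOn.integrableOn_Icc ?_).mono_set Ioc_subset_Icc_self
    refine ContinuousOn.mul
      (continuousOn_id.rpow_const fun t ht => Or.inl (ne_of_gt (hsub ht).1))
      ((continuousOn_const.sub continuousOn_id).rpow_const fun t ht => Or.inl ?_)
    have := (hsub ht).2; intro h; simp at h; linarith
  have hint2 : IntegrableOn (fun t => (2:ℝ) ^ ((5:ℝ)/2) * (1-t) ^ (-N/2)) (Ioc (1/2) x) := by
    refine (ContinuousOn.integrableOn_Icc ?_).mono_set Ioc_subset_Icc_self
    refine continuousOn_const.mul
      ((continuousOn_const.sub continuousOn_id).rpow_const fun t ht => Or.inl ?_)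
    have := (hsub ht).2; intro h; simp at h; linarith
  have hmono : ∫ t in Ioc (1/2) x, t ^ (-(5:ℝ)/2) * (1-t) ^ (-N/2) ≤
      ∫ t in Ioc (1/2) x, (2:ℝ) ^ ((5:ℝ)/2) * (1-t) ^ (-N/2) := by
    refine setIntegral_mono_on hint1 hint2 measurableSet_Ioc fun t ht => ?_
    have ht' := hsub (Ioc_subset_Icc_self ht)
    have : t ^ (-(5:ℝ)/2) ≤ ((1:ℝ)/2) ^ (-(5:ℝ)/2) :=
      Real.rpow_le_rpow_of_nonpos (by norm_num) ht.1.le (by norm_num)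
    rw [half_rpow, show -(-(5:ℝ)/2) = (5:ℝ)/2 by norm_num] at this
    exact mul_le_mul_of_nonneg_right this (rpow_nonneg (by linarith [ht'.2]) _)
  have hcalc : ∫ t in Ioc (1/2) x, (1-t) ^ (-N/2)
      = ((1/2:ℝ) ^ (-N/2 + 1) - (1-x) ^ (-N/2 + 1)) / (-N/2 + 1) := by
    rw [← intervalIntegral.integral_of_le hx]
    have := intervalIntegral.integral_comp_sub_left (a := (1/2:ℝ)) (b := x)
      (fun s => s ^ (-N/2)) 1
    rw [this]
    rw [integral_rpow (Or.inr ⟨by intro h; rw [div_eq_iff (by norm_num : (2:ℝ) ≠ 0)] at h; linarith [neg_eq_iff_eq_neg.mp h], ?_⟩)]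
    · norm_num
    · rw [uIcc_of_le (by linarith : 1 - x ≤ (1:ℝ) - 1/2)]
      intro h
      have := h.1
      simp at this
      linarith
  calc ∫ t in Ioc (1/2) x, t ^ (-(5:ℝ)/2) * (1-t) ^ (-N/2)
      ≤ ∫ t in Ioc (1/2) x, (2:ℝ) ^ ((5:ℝ)/2) * (1-t) ^ (-N/2) := hmono
    _ = (2:ℝ) ^ ((5:ℝ)/2) * ∫ t in Ioc (1/2) x, (1-t) ^ (-N/2) := by
        rw [integral_const_mul]
    _ ≤ (2:ℝ) ^ ((5:ℝ)/2) * (1-x) ^ ((1:ℝ) - N/2) := by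
        refine mul_le_mul_of_nonneg_left ?_ (rpow_nonneg (by norm_num) _)
        rw [hcalc]
        have h1 : (0:ℝ) ≤ (1/2:ℝ) ^ (-N/2 + 1) := rpow_nonneg (by norm_num) _
        have h2 : (0:ℝ) ≤ (1-x) ^ (-N/2 + 1) := rpow_nonneg h1x.le _
        have e : (1:ℝ) - N/2 = -N/2 + 1 := by ring
        rw [e]
        rw [div_le_iff_of_neg (by linarith : -N/2 + 1 < 0)]
        nlinarith


set_option maxHeartbeats 1600000 in
/-- Pointwise bound for functions in the weighted energy space
`𝔛¹ = {v : v, √(x(1-x)) v' ∈ L²((0,1), x^{3/2}(1-x)^{N/2-1} dx)}`: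
`|v(x)| ≤ C x^{-3/4} (1-x)^{-N/4+1/2}`. -/
theorem pointwise_bound_X1 (N : ℝ) (hN : 4 ≤ N) (v : ℝ → ℝ)
    (hv : ContDiffOn ℝ 1 v (Ioo 0 1))
    (hvX : IntegrableOn
      (fun x => v x^2 * (x ^ ((3:ℝ)/2) * (1-x) ^ (N/2 - 1))) (Ioo 0 1))
    (hvX1 : IntegrableOn
      (fun x => (x*(1-x)) * (deriv v x)^2 * (x ^ ((3:ℝ)/2) * (1-x) ^ (N/2 - 1)))
      (Ioo 0 1)) :
    ∃ C > 0, ∀ x ∈ Ioo (0:ℝ) 1,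
      |v x| ≤ C * x ^ (-(3:ℝ)/4) * (1-x) ^ (-N/4 + 1/2) := by
  set E : ℝ := ∫ t in Ioo (0:ℝ) 1,
    (t*(1-t)) * (deriv v t)^2 * (t ^ ((3:ℝ)/2) * (1-t) ^ (N/2 - 1)) with hE_def
  have hE0 : 0 ≤ E := by
    refine setIntegral_nonneg measurableSet_Ioo fun t ht => ?_
    have h1t : (0:ℝ) ≤ 1 - t := by linarith [ht.2]
    exact mul_nonneg (mul_nonneg (mul_nonneg ht.1.le h1t) (sq_nonneg _))
      (mul_nonneg (rpow_nonneg ht.1.le _) (rpow_nonneg h1t _))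
  set M : ℝ := (2:ℝ) ^ (N/2) + (2:ℝ) ^ ((5:ℝ)/2) with hM_def
  have h2N : (0:ℝ) < (2:ℝ) ^ (N/2) := rpow_pos_of_pos two_pos _
  have h25 : (0:ℝ) < (2:ℝ) ^ ((5:ℝ)/2) := rpow_pos_of_pos two_pos _
  have hM : 0 < M := by positivity
  set Q : ℝ := E ^ ((1:ℝ)/2) * M ^ ((1:ℝ)/2) with hQ_def
  have hQ0 : 0 ≤ Q := mul_nonneg (rpow_nonneg hE0 _) (rpow_nonneg hM.le _)
  refine ⟨|v (1/2)| + Q + 1, by have := abs_nonneg (v (1/2)); linarith, fun x hx => ?_⟩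
  have h1x : (0:ℝ) < 1 - x := by linarith [hx.2]
  have hx32 : (0:ℝ) < x ^ (-(3:ℝ)/2) := rpow_pos_of_pos hx.1 _
  have h1xe : (1:ℝ) ≤ (1-x) ^ ((1:ℝ) - N/2) :=
    Real.one_le_rpow_of_pos_of_le_one_of_nonpos h1x (by linarith [hx.1]) (by linarith)
  have hkey : |v x - v (1/2)| ≤
      E ^ ((1:ℝ)/2) * (M * (x ^ (-(3:ℝ)/2) * (1-x) ^ ((1:ℝ) - N/2))) ^ ((1:ℝ)/2) := by
    rcases le_or_gt x (1/2) with hhalf | hhalf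
    · have h := key_bound N v hv hvX1 hx.1 hhalf (by norm_num)
      rw [abs_sub_comm]
      refine h.trans (mul_le_mul_of_nonneg_left ?_ (rpow_nonneg hE0 _))
      have hI0 : (0:ℝ) ≤ ∫ t in Ioc x (1/2), t ^ (-(5:ℝ)/2) * (1-t) ^ (-N/2) := by
        refine setIntegral_nonneg measurableSet_Ioc fun t ht => ?_
        have ht0 : 0 < t := lt_trans hx.1 ht.1
        exact mul_nonneg (rpow_nonneg ht0.le _)
          (rpow_nonneg (by linarith [ht.2] : (0:ℝ) ≤ 1 - t) _)
      refine Real.rpow_le_rpow hI0 ?_ (by norm_num)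
      refine (est_left (by linarith) hx.1 hhalf).trans ?_
      simp only [hM_def]
      nlinarith [mul_nonneg (mul_pos h2N hx32).le (sub_nonneg.2 h1xe),
        mul_nonneg (mul_pos h25 hx32).le (by linarith : (0:ℝ) ≤ (1-x) ^ ((1:ℝ) - N/2))]
    · have h := key_bound N v hv hvX1 (show (0:ℝ) < 1/2 by norm_num) hhalf.le hx.2
      refine h.trans (mul_le_mul_of_nonneg_left ?_ (rpow_nonneg hE0 _))
      have hI0 : (0:ℝ) ≤ ∫ t in Ioc (1/2) x, t ^ (-(5:ℝ)/2) * (1-t) ^ (-N/2) := by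
        refine setIntegral_nonneg measurableSet_Ioc fun t ht => ?_
        have ht0 : (0:ℝ) < t := lt_trans (by norm_num : (0:ℝ) < 1/2) ht.1
        exact mul_nonneg (rpow_nonneg ht0.le _)
          (rpow_nonneg (by linarith [ht.2, hx.2] : (0:ℝ) ≤ 1 - t) _)
      refine Real.rpow_le_rpow hI0 ?_ (by norm_num)
      refine (est_right hN hhalf.le hx.2).trans ?_
      have hxe : (1:ℝ) ≤ x ^ (-(3:ℝ)/2) :=
        Real.one_le_rpow_of_pos_of_le_one_of_nonpos hx.1 hx.2.le (by norm_num)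
      have h1xe0 : (0:ℝ) ≤ (1-x) ^ ((1:ℝ) - N/2) := by linarith
      simp only [hM_def]
      nlinarith [mul_nonneg (mul_pos h25 (lt_of_lt_of_le one_pos hxe)).le
          (by linarith : (0:ℝ) ≤ (1-x) ^ ((1:ℝ) - N/2)),
        mul_nonneg (mul_nonneg h25.le h1xe0) (sub_nonneg.2 hxe),
        mul_nonneg (mul_pos h2N hx32).le h1xe0]
  have hsplit : (M * (x ^ (-(3:ℝ)/2) * (1-x) ^ ((1:ℝ) - N/2))) ^ ((1:ℝ)/2) =
      M ^ ((1:ℝ)/2) * (x ^ (-(3:ℝ)/4) * (1-x) ^ (-N/4 + 1/2)) := by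
    rw [Real.mul_rpow hM.le (mul_nonneg hx32.le (by linarith)),
      Real.mul_rpow hx32.le (by linarith), ← Real.rpow_mul hx.1.le,
      ← Real.rpow_mul h1x.le, show -(3:ℝ)/2 * ((1:ℝ)/2) = -(3:ℝ)/4 by norm_num,
      show ((1:ℝ) - N/2) * ((1:ℝ)/2) = -N/4 + 1/2 by ring]
  have hP1 : (1:ℝ) ≤ x ^ (-(3:ℝ)/4) * (1-x) ^ (-N/4 + 1/2) := by
    have ha : (1:ℝ) ≤ x ^ (-(3:ℝ)/4) :=
      Real.one_le_rpow_of_pos_of_le_one_of_nonpos hx.1 hx.2.le (by norm_num)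
    have hb : (1:ℝ) ≤ (1-x) ^ (-N/4 + 1/2) :=
      Real.one_le_rpow_of_pos_of_le_one_of_nonpos h1x (by linarith [hx.1]) (by linarith)
    nlinarith
  have htri : |v x| ≤ |v x - v (1/2)| + |v (1/2)| := by
    have := abs_add_le (v x - v (1/2)) (v (1/2))
    simpa using this
  have hfin : |v x| ≤ Q * (x ^ (-(3:ℝ)/4) * (1-x) ^ (-N/4 + 1/2)) + |v (1/2)| := by
    refine htri.trans (add_le_add ?_ le_rfl)
    rw [hQ_def, mul_assoc]
    exact hkey.trans (by rw [hsplit])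
  rw [mul_assoc]
  nlinarith [mul_nonneg (abs_nonneg (v (1/2)))
    (by linarith : (0:ℝ) ≤ x ^ (-(3:ℝ)/4) * (1-x) ^ (-N/4 + 1/2) - 1), hQ0,
    mul_nonneg hQ0 (by linarith : (0:ℝ) ≤ x ^ (-(3:ℝ)/4) * (1-x) ^ (-N/4 + 1/2) - 1)]
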